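/- Let f(z) = ((1+z²)/(1−z²))². For every z ∈ ℂ with z² ≠ 1, writing w = f(z), one has |f′(z)|² · (1+|z|²)² = 8|w| · |w−1| · (|w| + |w−1| + 1), where f′ denotes the complex derivative of f. Equivalently, for any s with s² = w, |f′(z)|² · (1+|z|²)² = 4|w||w−1|(|s−1|+|s+1|)²; i.e., the push forward of the round metric 4|dz|²/(1+|z|²)² under f is the metric |dw|²/(|w||w−1|(|√w+1|+|√w−1|)²). -/

import Mathlib

/-- The map `f(z) = ((1+z²)/(1−z²))²`. -/
noncomputable def f (z : ℂ) : ℂ := ((1 + z ^ 2) / (1 - z ^ 2)) ^ 2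

/-- Push-forward of the round metric `4|dz|²/(1+|z|²)²` under `f` is the metric
`|dw|²/(|w||w−1|(|√w+1|+|√w−1|)²)`: for `z² ≠ 1` and `w = f(z)` one has
`|f′(z)|²(1+|z|²)² = 8|w||w−1|(|w|+|w−1|+1)`, and equivalently, for any square root `s`
of `w`, `|f′(z)|²(1+|z|²)² = 4|w||w−1|(|s−1|+|s+1|)²`. -/
theorem pushforward_round_metric (z : ℂ) (hz : z ^ 2 ≠ 1) :
    (‖deriv f z‖) ^ 2 * (1 + ‖z‖ ^ 2) ^ 2 =
      8 * ‖f z‖ * ‖f z - 1‖ *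
        (‖f z‖ + ‖f z - 1‖ + 1) ∧
    ∀ s : ℂ, s ^ 2 = f z →
      (‖deriv f z‖) ^ 2 * (1 + ‖z‖ ^ 2) ^ 2 =
        4 * ‖f z‖ * ‖f z - 1‖ *
          (‖s - 1‖ + ‖s + 1‖) ^ 2 := by
  have hz1 : (1 : ℂ) - z ^ 2 ≠ 0 := sub_ne_zero.mpr hz.symm
  have hd : HasDerivAt f (8 * z * (1 + z ^ 2) / (1 - z ^ 2) ^ 3) z := by
    have h1 : HasDerivAt (fun z : ℂ => 1 + z ^ 2) (2 * z) z := by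
      simpa using (hasDerivAt_pow 2 z).const_add 1
    have h2 : HasDerivAt (fun z : ℂ => 1 - z ^ 2) (-(2 * z)) z := by
      simpa using (hasDerivAt_pow 2 z).const_sub 1
    have h3 := (h1.fun_div h2 hz1).fun_pow 2
    have hfz : f = fun z : ℂ => ((1 + z ^ 2) / (1 - z ^ 2)) ^ 2 := rfl
    rw [hfz]
    refine h3.congr_deriv ?_
    norm_num; field_simp
    ring
  have hderiv : deriv f z = 8 * z * (1 + z ^ 2) / (1 - z ^ 2) ^ 3 := hd.deriv
  set A := ‖1 + z ^ 2‖ with hA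
  set B := ‖1 - z ^ 2‖ with hB
  set Z := ‖z‖ with hZ
  have hB0 : B ≠ 0 := by rw [hB]; exact norm_ne_zero_iff.mpr hz1
  have habsf : ‖f z‖ = A ^ 2 / B ^ 2 := by
    simp [f, norm_div, norm_pow, div_pow, hA, hB]
  have hfm1 : f z - 1 = 4 * z ^ 2 / (1 - z ^ 2) ^ 2 := by
    rw [show f z = ((1 + z ^ 2) / (1 - z ^ 2)) ^ 2 from rfl]
    field_simp
    ring
  have habsfm1 : ‖f z - 1‖ = 4 * Z ^ 2 / B ^ 2 := by
    rw [hfm1, norm_div, norm_mul, norm_pow, norm_pow]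
    norm_num [hZ, hB]
  have habsd : ‖deriv f z‖ = 8 * Z * A / B ^ 3 := by
    rw [hderiv, norm_div, norm_mul, norm_mul, norm_pow]
    norm_num [hZ, hA, hB]
  have key : A ^ 2 + 4 * Z ^ 2 + B ^ 2 = 2 * (1 + Z ^ 2) ^ 2 := by
    rw [hA, hB, hZ]
    simp only [Complex.sq_norm]
    simp only [Complex.normSq_apply, pow_two, Complex.mul_re, Complex.mul_im, Complex.add_re,
      Complex.add_im, Complex.sub_re, Complex.sub_im, Complex.one_re, Complex.one_im]
    ring
  have H1 : (‖deriv f z‖) ^ 2 * (1 + ‖z‖ ^ 2) ^ 2 =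
      8 * ‖f z‖ * ‖f z - 1‖ *
        (‖f z‖ + ‖f z - 1‖ + 1) := by
    rw [habsd, habsf, habsfm1, ← hZ]
    field_simp
    linear_combination (-4 * Z ^ 2 * A ^ 2) * key
  refine ⟨H1, fun s hs => ?_⟩
  have hs1 : ‖s‖ ^ 2 = ‖f z‖ := by rw [← norm_pow, hs]
  have hs2 : ‖s - 1‖ * ‖s + 1‖ = ‖f z - 1‖ := by
    rw [← norm_mul]
    congr 1
    linear_combination hs
  have hs3 : ‖s - 1‖ ^ 2 + ‖s + 1‖ ^ 2 =
      2 * (‖s‖ ^ 2 + 1) := by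
    simp only [Complex.sq_norm]
    simp only [Complex.normSq_apply, Complex.add_re, Complex.add_im,
      Complex.sub_re, Complex.sub_im, Complex.one_re, Complex.one_im]
    ring
  have hsum : (‖s - 1‖ + ‖s + 1‖) ^ 2 =
      2 * (‖f z‖ + ‖f z - 1‖ + 1) := by
    linear_combination hs3 + 2 * hs2 + 2 * hs1
  rw [H1, hsum]
  ring
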